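/- Assume s ≥ m₀f₀ + m₁f₁ and define p̄(x,t) = 2 e^{(s−m₀f₀+m₁f₁)t} / (1 + (1−x) e^{(s−m₀f₀)t}) for x ∈ [0,1], t ≥ 0. Then p̄(x,0) ≥ 1 for all x ∈ [0,1], and p̄ is a supersolution of the derived equation (K1_x): for all x ∈ [0,1] and t > 0, ∂ₜp̄(x,t) + s(1−x)x ∂ₓp̄(x,t) + (s(1−2x) + m₀f₀ + m₁f₁) p̄(x,t) ≥ λ₀f₀(1−γ₀)[p̄(x+γ₀(1−x),t) − p̄(x,t)] + λ₁f₁(1−γ₁)[p̄(x−γ₁x,t) − p̄(x,t)]. -/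

import Mathlib

open Set Filter Topology

/-- The barrier function `p̄(x,t) = 2 e^{(s-m₀f₀+m₁f₁)t} / (1 + (1-x) e^{(s-m₀f₀)t})`. -/
noncomputable def pbar (s m0 m1 f0 f1 : ℝ) (x t : ℝ) : ℝ :=
  2 * Real.exp ((s - m0 * f0 + m1 * f1) * t)
    / (1 + (1 - x) * Real.exp ((s - m0 * f0) * t))

set_option maxHeartbeats 1000000 in
/-- if `s ≥ m₀f₀ + m₁f₁` then `p̄(·,0) ≥ 1` and `p̄` is a
supersolution of the derived equation (K1_x). -/
theorem stmt_6 (f0 f1 g0 g1 l0 l1 s m0 m1 : ℝ)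
    (hf : f1 < f0) (hf1 : 0 ≤ f1) (hs : s = f0 - f1)
    (hg0 : g0 ∈ Set.Ioc (0:ℝ) 1) (hg1 : g1 ∈ Set.Ioc (0:ℝ) 1)
    (hl0 : 0 ≤ l0) (hl1 : 0 ≤ l1)
    (hm0 : m0 = l0 * g0) (hm1 : m1 = l1 * g1)
    (hrange : m0 * f0 + m1 * f1 ≤ s) :
    (∀ x ∈ Set.Icc (0:ℝ) 1, 1 ≤ pbar s m0 m1 f0 f1 x 0) ∧
    (∀ x ∈ Set.Icc (0:ℝ) 1, ∀ t > (0:ℝ),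
      deriv (fun τ => pbar s m0 m1 f0 f1 x τ) t
        + s * (1 - x) * x * deriv (fun y => pbar s m0 m1 f0 f1 y t) x
        + (s * (1 - 2 * x) + m0 * f0 + m1 * f1) * pbar s m0 m1 f0 f1 x t
      ≥ l0 * f0 * (1 - g0)
          * (pbar s m0 m1 f0 f1 (x + g0 * (1 - x)) t - pbar s m0 m1 f0 f1 x t)
        + l1 * f1 * (1 - g1)
          * (pbar s m0 m1 f0 f1 (x - g1 * x) t - pbar s m0 m1 f0 f1 x t)) := by
  constructor
  · intro x hx
    simp only [pbar, mul_zero, Real.exp_zero, mul_one]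
    rw [le_div_iff₀ (by linarith [hx.2])]
    linarith [hx.1]
  · intro x hx t ht
    obtain ⟨hx0, hx1⟩ := hx
    simp only [pbar]
    set A := s - m0 * f0 + m1 * f1 with hA
    set B := s - m0 * f0 with hB
    set E1 := Real.exp (A * t) with hE1def
    set E := Real.exp (B * t) with hEdef
    have hE1 : 0 < E1 := Real.exp_pos _
    have hE : 0 < E := Real.exp_pos _
    have hD : 0 < 1 + (1 - x) * E := by nlinarith
    have hD0 : 0 < 1 + (1 - (x + g0 * (1 - x))) * E := by nlinarith [hg0.2, hg0.1]
    have hD1 : 0 < 1 + (1 - (x - g1 * x)) * E := by nlinarith [hg1.2, hg1.1]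
    have hnum : HasDerivAt (fun τ : ℝ => 2 * Real.exp (A * τ)) (2 * (E1 * A)) t := by
      have := (((hasDerivAt_id t).const_mul A).exp).const_mul 2
      simpa [hE1def] using this
    have hdent : HasDerivAt (fun τ : ℝ => 1 + (1 - x) * Real.exp (B * τ))
        ((1 - x) * (E * B)) t := by
      have := ((((hasDerivAt_id t).const_mul B).exp).const_mul (1 - x)).const_add 1
      simpa [hEdef] using this
    have hdt : HasDerivAt (fun τ : ℝ => 2 * Real.exp (A * τ) / (1 + (1 - x) * Real.exp (B * τ)))
        ((2 * (E1 * A) * (1 + (1 - x) * E) - 2 * E1 * ((1 - x) * (E * B)))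
          / (1 + (1 - x) * E) ^ 2) t := hnum.div hdent hD.ne'
    have hdenx : HasDerivAt (fun y : ℝ => 1 + (1 - y) * E) (-E) x := by
      have := (((hasDerivAt_const x (1:ℝ)).sub (hasDerivAt_id x)).mul_const E).const_add 1
      simpa using this
    have hdx : HasDerivAt (fun y : ℝ => 2 * E1 / (1 + (1 - y) * E))
        ((0 * (1 + (1 - x) * E) - 2 * E1 * (-E)) / (1 + (1 - x) * E) ^ 2) x :=
      (hasDerivAt_const x (2 * E1)).div hdenx hD.ne'
    rw [hdt.deriv, hdx.deriv]
    have hm0n : 0 ≤ m0 := by rw [hm0]; exact mul_nonneg hl0 hg0.1.le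
    have hm1n : 0 ≤ m1 := by rw [hm1]; exact mul_nonneg hl1 hg1.1.le
    have hf0 : 0 < f0 := lt_of_le_of_lt hf1 hf
    have hs' : 0 < s := by rw [hs]; linarith
    have h1x : 0 ≤ 1 - x := by linarith
    -- the second (downward-mutation) term on the RHS is nonpositive
    have hfrac : 2 * E1 / (1 + (1 - (x - g1 * x)) * E) ≤ 2 * E1 / (1 + (1 - x) * E) := by
      apply div_le_div_of_nonneg_left (by positivity) hD
      nlinarith [mul_nonneg (mul_nonneg hg1.1.le hx0) hE.le]
    have hR1 : l1 * f1 * (1 - g1) *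
        (2 * E1 / (1 + (1 - (x - g1 * x)) * E) - 2 * E1 / (1 + (1 - x) * E)) ≤ 0 :=
      mul_nonpos_of_nonneg_of_nonpos
        (mul_nonneg (mul_nonneg hl1 hf1) (by linarith [hg1.2]))
        (sub_nonpos.mpr hfrac)
    -- the main part: LHS minus the first RHS term is an explicit nonnegative fraction
    have key :
        (2 * (E1 * A) * (1 + (1 - x) * E) - 2 * E1 * ((1 - x) * (E * B))) / (1 + (1 - x) * E) ^ 2 +
            s * (1 - x) * x * ((0 * (1 + (1 - x) * E) - 2 * E1 * -E) / (1 + (1 - x) * E) ^ 2) +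
          (s * (1 - 2 * x) + m0 * f0 + m1 * f1) * (2 * E1 / (1 + (1 - x) * E)) -
          l0 * f0 * (1 - g0) *
              (2 * E1 / (1 + (1 - (x + g0 * (1 - x))) * E) - 2 * E1 / (1 + (1 - x) * E)) =
        2 * E1 *
          ((2 * m1 * f1 * (1 + (1 - x) * E) * (1 + (1 - (x + g0 * (1 - x))) * E) +
              s * (1 - x) * (1 + (1 - (x + g0 * (1 - x))) * E) * (2 + (1 - x) * E) +
              m0 * f0 * (1 - x) * E * g0) /
            ((1 + (1 - x) * E) ^ 2 * (1 + (1 - (x + g0 * (1 - x))) * E))) := by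
      simp only [hA, hB, hm0, hm1]
      have hD0' := hD0.ne'
      generalize hG : 1 + (1 - (x + g0 * (1 - x))) * E = G at hD0' ⊢
      field_simp
      rw [← hG]
      ring
    have t1 : 0 ≤ 2 * m1 * f1 * (1 + (1 - x) * E) * (1 + (1 - (x + g0 * (1 - x))) * E) :=
      mul_nonneg (mul_nonneg (mul_nonneg (by linarith) hf1) hD.le) hD0.le
    have t2 : 0 ≤ s * (1 - x) * (1 + (1 - (x + g0 * (1 - x))) * E) * (2 + (1 - x) * E) :=
      mul_nonneg (mul_nonneg (mul_nonneg hs'.le h1x) hD0.le) (by nlinarith)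
    have t3 : 0 ≤ m0 * f0 * (1 - x) * E * g0 :=
      mul_nonneg (mul_nonneg (mul_nonneg (mul_nonneg hm0n hf0.le) h1x) hE.le) hg0.1.le
    have d1 : 0 ≤ (1 + (1 - x) * E) ^ 2 * (1 + (1 - (x + g0 * (1 - x))) * E) :=
      mul_nonneg (sq_nonneg _) hD0.le
    have hmain : 0 ≤ 2 * E1 *
        ((2 * m1 * f1 * (1 + (1 - x) * E) * (1 + (1 - (x + g0 * (1 - x))) * E) +
            s * (1 - x) * (1 + (1 - (x + g0 * (1 - x))) * E) * (2 + (1 - x) * E) +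
            m0 * f0 * (1 - x) * E * g0) /
          ((1 + (1 - x) * E) ^ 2 * (1 + (1 - (x + g0 * (1 - x))) * E))) :=
      mul_nonneg (by linarith) (div_nonneg (by linarith) d1)
    linarith [key, hmain, hR1]
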